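/- Let K be an algebraically closed field, let V be a finite-dimensional K-vector space, and let 𝔥 ⊆ 𝔰𝔩(V) be a Lie subalgebra. Then 𝔥 is SL(V)-completely reducible if and only if V is a semisimple 𝔥-module. -/

import Mathlib

/-!
Statement 12 (McNinch, "Completely reducible Lie subalgebras", footnote in §1).

Let `K` be an algebraically closed field, `V` a finite-dimensional `K`-vector space, and
`𝔥 ⊆ 𝔰𝔩(V)` a Lie subalgebra.  Then `𝔥` is `SL(V)`-completely reducible if and only if `V` is
a semisimple `𝔥`-module.

The parabolic subgroups of `SL(V)` are exactly the subgroups `P(γ)` attached to the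
(algebraic) cocharacters `γ : 𝔾_m → SL(V)`, and such cocharacters correspond to the finite
`ℤ`-gradings `V = ⊕ V_i` with `∑ i·dim V_i = 0` ("centered" gradings); the Lie algebra of
`P(γ)` consists of the trace-zero endomorphisms preserving the flag `V_{≥ i} = ⊕_{j ≥ i} V_j`,
and the Lie algebras of the Levi factors of `P(γ)` are the trace-zero endomorphisms
preserving all weight spaces of some centered grading with the same flag.  Since `𝔥`
consists of trace-zero endomorphisms, `G`-complete reducibility of `𝔥` is expressed below
purely in terms of gradings.  Semisimplicity of `V` as an `𝔥`-module is expressed by the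
property that every `𝔥`-invariant subspace admits an `𝔥`-invariant complement.
-/


variable (K V : Type*) [Field K] [AddCommGroup V] [Module K V]

/-- A (finite) `ℤ`-grading of the `K`-vector space `V`, i.e. an internal direct sum
decomposition `V = ⊕_{i ∈ ℤ} V_i` with finitely many nonzero summands.  Such gradings
correspond to the algebraic cocharacters `𝔾_m → GL(V)` (the cocharacter acts on `V_i` by
`t ↦ tⁱ`). -/
structure ZGrading where
  /-- the weight spaces -/
  w : ℤ → Submodule K V
  internal : DirectSum.IsInternal w
  finiteSupport : {i : ℤ | w i ≠ ⊥}.Finite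

variable {K V}

namespace ZGrading

/-- The descending filtration `V_{≥ i} = ⊕_{j ≥ i} V_j` (the flag) attached to a grading. -/
def filt (gr : ZGrading K V) (i : ℤ) : Submodule K V :=
  ⨆ j ≥ i, gr.w j

/-- A grading is centered if `∑ i·dim V_i = 0`; these are the gradings corresponding to the
cocharacters of `SL(V)` (the associated cocharacter of `GL(V)` has determinant
`t ↦ t^{∑ i·dim V_i}`). -/
def IsCentered (gr : ZGrading K V) : Prop :=
  ∑ᶠ i : ℤ, i * (Module.finrank K (gr.w i) : ℤ) = 0

end ZGrading

attribute [local instance 100] LieRing.ofAssociativeRing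

/-- A Lie subalgebra `𝔥 ⊆ 𝔰𝔩(V)` is `SL(V)`-completely reducible: whenever `𝔥 ⊆ Lie(P)` for a
parabolic subgroup `P ⊆ SL(V)` — that is, whenever `𝔥` preserves the flag attached to a
(centered) grading of `V` — there is a Levi factor `L` of `P` with `𝔥 ⊆ Lie(L)` — that is,
a grading with the same flag all of whose weight spaces are preserved by `𝔥`. -/
def LieIsCrSL (𝔥 : LieSubalgebra K (Module.End K V)) : Prop :=
  ∀ gr : ZGrading K V, gr.IsCentered →
    (∀ x ∈ 𝔥, ∀ i, ∀ u ∈ gr.filt i, x u ∈ gr.filt i) →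
    ∃ gr' : ZGrading K V, gr'.IsCentered ∧ Set.range gr'.filt = Set.range gr.filt ∧
      ∀ x ∈ 𝔥, ∀ i, ∀ u ∈ gr'.w i, x u ∈ gr'.w i

section AuxLemmas

variable {ι α : Type*}

/-- If a finite family is `SupIndep` on a union of two disjoint finsets, the two partial sups
are disjoint. -/
lemma aux_supIndep_disjoint [Lattice α] [OrderBot α] [IsModularLattice α] [DecidableEq ι]
    {f : ι → α} {t : Finset ι} :
    ∀ {s : Finset ι}, (s ∪ t).SupIndep f → Disjoint s t → Disjoint (s.sup f) (t.sup f) := by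
  classical
  intro s
  induction s using Finset.induction_on with
  | empty => intro _ _; simp
  | insert i s hi ih =>
    intro h hst
    rw [Finset.sup_insert]
    have hit : i ∉ t := Finset.disjoint_left.1 hst (Finset.mem_insert_self i s)
    have hd1 : Disjoint (f i) (s.sup f ⊔ t.sup f) := by
      have h2 : Disjoint (f i) ((s ∪ t).sup f) :=
        h (Finset.union_subset_union_left (Finset.subset_insert i s))
          (Finset.mem_union_left _ (Finset.mem_insert_self i s))
          (by simp [hi, hit])
      rwa [Finset.sup_union] at h2
    have hd2 : Disjoint (s.sup f) (t.sup f) :=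
      ih (h.subset (Finset.union_subset_union_left (Finset.subset_insert i s)))
        (hst.mono_left (Finset.subset_insert i s))
    rw [disjoint_iff] at hd1 hd2 ⊢
    have e : (f i ⊔ s.sup f) ⊓ (s.sup f ⊔ t.sup f) = s.sup f := by
      rw [sup_comm (f i) (s.sup f), sup_inf_assoc_of_le _ le_sup_left, hd1, sup_bot_eq]
    calc (f i ⊔ s.sup f) ⊓ t.sup f
        = ((f i ⊔ s.sup f) ⊓ (s.sup f ⊔ t.sup f)) ⊓ t.sup f := by
          rw [inf_assoc,
            (inf_eq_right.2 le_sup_right : (s.sup f ⊔ t.sup f) ⊓ t.sup f = t.sup f)]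
      _ = s.sup f ⊓ t.sup f := by rw [e]
      _ = ⊥ := hd2

/-- A bounded supremum of a family with finite support is a finite sup. -/
lemma aux_biSup_eq_sup [CompleteLattice α] (t : ι → α) (p : ι → Prop) [DecidablePred p]
    (s : Finset ι) (hs : ∀ j, t j ≠ ⊥ → j ∈ s) :
    (⨆ j, ⨆ _ : p j, t j) = (s.filter p).sup t := by
  apply le_antisymm
  · refine iSup₂_le fun j hj => ?_
    by_cases hb : t j = ⊥
    · rw [hb]; exact bot_le
    · exact Finset.le_sup (Finset.mem_filter.2 ⟨hs j hb, hj⟩)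
  · exact Finset.sup_le fun j hj =>
      le_iSup₂ (f := fun j (_ : p j) => t j) j (Finset.mem_filter.1 hj).2

end AuxLemmas

/-- **Footnote in §1**: a Lie subalgebra `𝔥 ⊆ 𝔰𝔩(V)` is `SL(V)`-completely reducible if and
only if `V` is a semisimple `𝔥`-module. -/
theorem lieIsCrSL_iff_semisimple
    {K V : Type*} [Field K] [IsAlgClosed K] [AddCommGroup V] [Module K V]
    [FiniteDimensional K V]
    (𝔥 : LieSubalgebra K (Module.End K V))
    (h𝔥sl : ∀ x ∈ 𝔥, LinearMap.trace K V x = 0) :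
    LieIsCrSL 𝔥 ↔
      ∀ U : Submodule K V, (∀ x ∈ 𝔥, ∀ u ∈ U, x u ∈ U) →
        ∃ U' : Submodule K V, (∀ x ∈ 𝔥, ∀ u ∈ U', x u ∈ U') ∧ IsCompl U U' := by
  classical
  constructor
  · -- complete reducibility implies semisimplicity
    intro hcr U hU
    by_cases hUtop : U = ⊤
    · refine ⟨⊥, fun x _ u hu => ?_, hUtop ▸ isCompl_top_bot⟩
      simp only [Submodule.mem_bot] at hu ⊢
      rw [hu, map_zero]
    by_cases hUbot : U = ⊥
    · exact ⟨⊤, fun _ _ _ _ => Submodule.mem_top, hUbot ▸ isCompl_bot_top⟩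
    obtain ⟨W, hW⟩ := Submodule.exists_isCompl U
    have hWbot : W ≠ ⊥ := by
      rintro rfl
      exact hUtop (by simpa using codisjoint_iff.1 hW.codisjoint)
    set a : ℤ := (Module.finrank K W : ℤ) with ha_def
    set b : ℤ := -(Module.finrank K U : ℤ) with hb_def
    have haW : Module.finrank K W ≠ 0 := fun h => hWbot (Submodule.finrank_eq_zero.1 h)
    have hbU : Module.finrank K U ≠ 0 := fun h => hUbot (Submodule.finrank_eq_zero.1 h)
    have ha : 0 < a := by rw [ha_def]; exact_mod_cast Nat.pos_of_ne_zero haW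
    have hb : b < 0 := by
      rw [hb_def]
      simp only [neg_neg, Left.neg_neg_iff]
      exact_mod_cast Nat.pos_of_ne_zero hbU
    have hab : b < a := lt_trans hb ha
    set w : ℤ → Submodule K V := fun i => if i = a then U else if i = b then W else ⊥
      with hw_def
    have hwa : w a = U := by simp [w]
    have hwb : w b = W := by simp [w, ne_of_lt hab]
    have hwo : ∀ i, i ≠ a → i ≠ b → w i = ⊥ := fun i h1 h2 => by simp [w, h1, h2]
    have hsup : ⨆ i, w i = ⊤ := by
      rw [eq_top_iff, ← codisjoint_iff.1 hW.codisjoint]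
      exact sup_le (by rw [← hwa]; exact le_iSup w a) (by rw [← hwb]; exact le_iSup w b)
    have hindep : iSupIndep w := by
      intro i
      rcases eq_or_ne i a with rfl | hia
      · rw [hwa]
        refine Disjoint.mono_right ?_ hW.disjoint
        refine iSup₂_le fun j hj => ?_
        rcases eq_or_ne j b with rfl | hjb
        · rw [hwb]
        · rw [hwo j hj hjb]; exact bot_le
      rcases eq_or_ne i b with rfl | hib
      · rw [hwb]
        refine Disjoint.mono_right ?_ hW.disjoint.symm
        refine iSup₂_le fun j hj => ?_
        rcases eq_or_ne j a with rfl | hja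
        · rw [hwa]
        · rw [hwo j hja hj]; exact bot_le
      · rw [hwo i hia hib]; exact disjoint_bot_left
    have hfs : {i : ℤ | w i ≠ ⊥}.Finite := by
      apply ((Set.finite_singleton b).insert a).subset
      intro i hi
      by_contra hmem
      simp only [Set.mem_insert_iff, Set.mem_singleton_iff] at hmem
      push_neg at hmem
      exact hi (hwo i hmem.1 hmem.2)
    let gr : ZGrading K V :=
      ⟨w, DirectSum.isInternal_submodule_of_iSupIndep_of_iSup_eq_top hindep hsup, hfs⟩
    have hfilt : ∀ i, gr.filt i = if i ≤ b then ⊤ else if i ≤ a then U else ⊥ := by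
      intro i
      show (⨆ j ≥ i, w j) = _
      apply le_antisymm
      · refine iSup₂_le fun j hj => ?_
        rcases eq_or_ne j a with rfl | hja
        · rw [hwa]
          by_cases h1 : i ≤ b
          · simp [h1]
          · simp [h1, hj]
        rcases eq_or_ne j b with rfl | hjb
        · have h1 : i ≤ b := hj
          simp [h1]
        · rw [hwo j hja hjb]; exact bot_le
      · by_cases h1 : i ≤ b
        · simp only [if_pos h1]
          rw [← codisjoint_iff.1 hW.codisjoint]
          refine sup_le ?_ ?_
          · rw [← hwa]
            exact le_iSup₂ (f := fun j (_ : j ≥ i) => w j) a (le_trans h1 (le_of_lt hab))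
          · rw [← hwb]
            exact le_iSup₂ (f := fun j (_ : j ≥ i) => w j) b h1
        · by_cases h2 : i ≤ a
          · simp only [if_neg h1, if_pos h2]
            rw [← hwa]
            exact le_iSup₂ (f := fun j (_ : j ≥ i) => w j) a h2
          · simp [h1, h2]
    have hcent : gr.IsCentered := by
      show ∑ᶠ i : ℤ, i * (Module.finrank K (w i) : ℤ) = 0
      have hsupp : (Function.support fun i : ℤ => i * (Module.finrank K (w i) : ℤ)) ⊆
          (({a, b} : Finset ℤ) : Set ℤ) := by
        intro i hi
        simp only [Function.mem_support] at hi
        simp only [Finset.coe_insert, Finset.coe_singleton, Set.mem_insert_iff,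
          Set.mem_singleton_iff]
        by_contra h
        push_neg at h
        apply hi
        rw [hwo i h.1 h.2]
        simp
      rw [finsum_eq_sum_of_support_subset _ hsupp, Finset.sum_pair (ne_of_gt hab)]
      rw [hwa, hwb, ha_def, hb_def]
      ring
    have hflaginv : ∀ x ∈ 𝔥, ∀ i, ∀ u ∈ gr.filt i, x u ∈ gr.filt i := by
      intro x hx i u hu
      rw [hfilt i] at hu ⊢
      split_ifs at hu ⊢ with h1 h2
      · exact Submodule.mem_top
      · exact hU x hx u hu
      · simp only [Submodule.mem_bot] at hu ⊢
        rw [hu, map_zero]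
    obtain ⟨gr', hcent', hrange, hwinv⟩ := hcr gr hcent hflaginv
    have hUmem : U ∈ Set.range gr'.filt := by
      rw [hrange]
      refine ⟨a, ?_⟩
      rw [hfilt a]
      simp [not_le.2 hab]
    obtain ⟨i₀, hi₀⟩ := hUmem
    set U' : Submodule K V := ⨆ j : {j : ℤ // j < i₀}, gr'.w j with hU'def
    refine ⟨U', ?_, ?_, ?_⟩
    · intro x hx u hu
      refine Submodule.iSup_induction (p := fun j : {j : ℤ // j < i₀} => gr'.w j)
        (motive := fun v => x v ∈ U') hu (fun j v hv => ?_) ?_ ?_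
      · exact le_iSup (fun j : {j : ℤ // j < i₀} => gr'.w (j : ℤ)) j (hwinv x hx j v hv)
      · show x (0 : V) ∈ U'
        rw [map_zero]; exact zero_mem _
      · intro y z hy hz
        show x (y + z) ∈ U'
        rw [map_add]; exact add_mem hy hz
    · -- disjoint
      have hS := gr'.finiteSupport
      have hmem : ∀ j, gr'.w j ≠ ⊥ → j ∈ hS.toFinset := fun j hj => hS.mem_toFinset.2 hj
      have e1 : U = (hS.toFinset.filter (fun j => i₀ ≤ j)).sup gr'.w := by
        rw [← hi₀]
        exact aux_biSup_eq_sup gr'.w (fun j => i₀ ≤ j) hS.toFinset hmem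
      have e2 : U' = (hS.toFinset.filter (fun j => j < i₀)).sup gr'.w := by
        have e2' := aux_biSup_eq_sup gr'.w (fun j => j < i₀) hS.toFinset hmem
        rw [← e2', hU'def]
        apply le_antisymm
        · exact iSup_le fun j =>
            le_iSup₂ (f := fun j (_ : j < i₀) => gr'.w j) (j : ℤ) j.2
        · exact iSup₂_le fun j hj =>
            le_iSup (fun j : {j : ℤ // j < i₀} => gr'.w (j : ℤ)) ⟨j, hj⟩
      rw [e1, e2]
      apply aux_supIndep_disjoint
      · exact gr'.internal.submodule_iSupIndep.supIndep' _
      · rw [Finset.disjoint_left]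
        intro j h1 h2
        rw [Finset.mem_filter] at h1 h2
        omega
    · -- codisjoint
      rw [codisjoint_iff, eq_top_iff, ← gr'.internal.submodule_iSup_eq_top]
      refine iSup_le fun j => ?_
      rcases lt_or_ge j i₀ with h | h
      · exact le_trans (le_iSup (fun j : {j : ℤ // j < i₀} => gr'.w (j : ℤ)) ⟨j, h⟩)
          le_sup_right
      · have hj : gr'.w j ≤ gr'.filt i₀ :=
          le_iSup₂ (f := fun j (_ : j ≥ i₀) => gr'.w j) j h
        rw [hi₀] at hj
        exact hj.trans le_sup_left
  · -- semisimplicity implies complete reducibility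
    intro hss gr hcent hflag
    have hfin := gr.finiteSupport
    obtain ⟨N, hN⟩ := hfin.bddAbove
    obtain ⟨M, hM⟩ := hfin.bddBelow
    have hwbot : ∀ i : ℤ, ¬ i ≤ N → gr.w i = ⊥ := by
      intro i h
      by_contra hne
      exact h (hN hne)
    have hfiltbot : ∀ i, N < i → gr.filt i = ⊥ := by
      intro i hi
      refine le_bot_iff.1 (iSup₂_le fun j hj => ?_)
      rw [hwbot j (by omega)]
    have hfilttop : ∀ i, i ≤ M → gr.filt i = ⊤ := by
      intro i hi
      rw [eq_top_iff, ← gr.internal.submodule_iSup_eq_top]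
      refine iSup_le fun j => ?_
      by_cases hj : gr.w j = ⊥
      · rw [hj]; exact bot_le
      · exact le_iSup₂ (f := fun j (_ : j ≥ i) => gr.w j) j (le_trans hi (hM hj))
    have hfiltmono : ∀ {i j : ℤ}, i ≤ j → gr.filt j ≤ gr.filt i := by
      intro i j hij
      exact iSup₂_le fun k hk =>
        le_iSup₂ (f := fun k (_ : k ≥ i) => gr.w k) k (le_trans hij hk)
    have hsupstep : ∀ i, gr.w i ⊔ gr.filt (i + 1) = gr.filt i := by
      intro i
      apply le_antisymm
      · exact sup_le (le_iSup₂ (f := fun j (_ : j ≥ i) => gr.w j) i le_rfl)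
          (hfiltmono (by omega))
      · refine iSup₂_le fun j hj => ?_
        rcases eq_or_lt_of_le hj with rfl | h
        · exact le_sup_left
        · exact le_trans
            (le_iSup₂ (f := fun k (_ : k ≥ i + 1) => gr.w k) j (by omega)) le_sup_right
    have hdisjstep : ∀ i, Disjoint (gr.w i) (gr.filt (i + 1)) := by
      intro i
      exact gr.internal.submodule_iSupIndep.disjoint_biSup
        (x := i) (y := {j : ℤ | j ≥ i + 1}) (by simp)
    have hchoice : ∀ i : ℤ, ∃ U' : Submodule K V,
        (∀ x ∈ 𝔥, ∀ u ∈ U', x u ∈ U') ∧ IsCompl (gr.filt (i + 1)) U' :=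
      fun i => hss (gr.filt (i + 1)) (fun x hx u hu => hflag x hx (i + 1) u hu)
    choose Uc hUc using hchoice
    set C : ℤ → Submodule K V := fun i => Uc i ⊓ gr.filt i with hCdef
    have hCsub : ∀ i, C i ≤ gr.filt i := fun i => inf_le_right
    have hCdisj : ∀ i, Disjoint (C i) (gr.filt (i + 1)) :=
      fun i => Disjoint.mono_left inf_le_left (hUc i).2.disjoint.symm
    have hCsup : ∀ i, C i ⊔ gr.filt (i + 1) = gr.filt i := by
      intro i
      have h1 : gr.filt (i + 1) ≤ gr.filt i := hfiltmono (by omega)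
      calc C i ⊔ gr.filt (i + 1) = gr.filt i ⊓ Uc i ⊔ gr.filt (i + 1) := by
            rw [hCdef]; rw [inf_comm]
        _ = gr.filt i ⊓ (Uc i ⊔ gr.filt (i + 1)) := inf_sup_assoc_of_le _ h1
        _ = gr.filt i ⊓ ⊤ := by
            rw [sup_comm, codisjoint_iff.1 (hUc i).2.codisjoint]
        _ = gr.filt i := inf_top_eq _
    have hCbotlow : ∀ i, i < M → C i = ⊥ := by
      intro i hi
      have h1 : gr.filt (i + 1) = ⊤ := hfilttop _ (by omega)
      have h2 : Uc i = ⊥ := by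
        have hd := (hUc i).2.disjoint
        rw [h1] at hd
        exact top_disjoint.1 hd
      rw [hCdef]
      simp [h2]
    have hCbothigh : ∀ i, N < i → C i = ⊥ := by
      intro i hi
      refine le_bot_iff.1 ?_
      rw [← hfiltbot i hi]
      exact hCsub i
    have hQ : ∀ i, (⨆ j, ⨆ _ : j ≥ i, C j) = gr.filt i := by
      have base : ∀ i, N < i → (⨆ j, ⨆ _ : j ≥ i, C j) = gr.filt i := by
        intro i hi
        rw [hfiltbot i hi]
        refine le_bot_iff.1 (iSup₂_le fun j hj => ?_)
        rw [hCbothigh j (by omega)]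
      intro i
      rcases lt_or_ge N i with h | h
      · exact base i h
      · refine Int.le_induction_down (m := N + 1)
          (motive := fun i _ => (⨆ j, ⨆ _ : j ≥ i, C j) = gr.filt i)
          (base (N + 1) (by omega)) ?_ i (by omega)
        intro n _ hP
        show (⨆ j, ⨆ _ : j ≥ n - 1, C j) = gr.filt (n - 1)
        have hsplit : (⨆ j, ⨆ _ : j ≥ n - 1, C j) = C (n - 1) ⊔ ⨆ j, ⨆ _ : j ≥ n, C j := by
          apply le_antisymm
          · refine iSup₂_le fun j hj => ?_
            rcases eq_or_lt_of_le hj with rfl | h'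
            · exact le_sup_left
            · exact le_trans
                (le_iSup₂ (f := fun j (_ : j ≥ n) => C j) j (by omega)) le_sup_right
          · refine sup_le (le_iSup₂ (f := fun j (_ : j ≥ n - 1) => C j) (n - 1) le_rfl)
              (iSup₂_le fun j hj =>
                le_iSup₂ (f := fun j (_ : j ≥ n - 1) => C j) j (by omega))
        have hstep := hCsup (n - 1)
        rw [sub_add_cancel] at hstep
        rw [hsplit, hP, hstep]
    set A : ℤ → Submodule K V := fun i => ⨆ j, ⨆ _ : j < i, C j with hAdef
    have hAstep : ∀ i, A (i + 1) = A i ⊔ C i := by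
      intro i
      apply le_antisymm
      · refine iSup₂_le fun j hj => ?_
        by_cases h' : j < i
        · exact le_trans (le_iSup₂ (f := fun j (_ : j < i) => C j) j h') le_sup_left
        · have hji : j = i := by omega
          subst hji
          exact le_sup_right
      · refine sup_le (iSup₂_le fun j hj =>
          le_iSup₂ (f := fun j (_ : j < i + 1) => C j) j (by omega))
          (le_iSup₂ (f := fun j (_ : j < i + 1) => C j) i (by omega))
    have hAbot : ∀ i, i ≤ M → A i = ⊥ := by
      intro i hi
      refine le_bot_iff.1 (iSup₂_le fun j hj => ?_)
      rw [hCbotlow j (by omega)]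
    have hR : ∀ i, Disjoint (A i) (gr.filt i) := by
      intro i
      rcases le_or_gt i M with h | h
      · rw [hAbot i h]; exact disjoint_bot_left
      · refine Int.le_induction (m := M) (motive := fun i _ => Disjoint (A i) (gr.filt i)) ?_ ?_ i (by omega)
        · show Disjoint (A M) (gr.filt M)
          rw [hAbot M le_rfl]; exact disjoint_bot_left
        · intro n _ hPn
          show Disjoint (A (n + 1)) (gr.filt (n + 1))
          rw [hAstep n, disjoint_iff]
          have h1 : gr.filt (n + 1) ≤ gr.filt n := hfiltmono (by omega)
          have key : (A n ⊔ C n) ⊓ gr.filt n = C n := by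
            rw [sup_comm, sup_inf_assoc_of_le _ (hCsub n), disjoint_iff.1 hPn, sup_bot_eq]
          calc (A n ⊔ C n) ⊓ gr.filt (n + 1)
              = ((A n ⊔ C n) ⊓ gr.filt n) ⊓ gr.filt (n + 1) := by
                rw [inf_assoc, inf_eq_right.2 h1]
            _ = C n ⊓ gr.filt (n + 1) := by rw [key]
            _ = ⊥ := disjoint_iff.1 (hCdisj n)
    have hCindep : iSupIndep C := by
      intro i
      have hle : (⨆ j, ⨆ _ : j ≠ i, C j) ≤ A i ⊔ gr.filt (i + 1) := by
        refine iSup₂_le fun j hj => ?_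
        rcases lt_or_gt_of_ne hj with h | h
        · exact le_trans (le_iSup₂ (f := fun j (_ : j < i) => C j) j h) le_sup_left
        · exact le_trans ((hCsub j).trans (hfiltmono (by omega))) le_sup_right
      refine Disjoint.mono_right hle ?_
      rw [disjoint_iff]
      have h1 : gr.filt (i + 1) ≤ gr.filt i := hfiltmono (by omega)
      have key : gr.filt i ⊓ (A i ⊔ gr.filt (i + 1)) = gr.filt (i + 1) := by
        rw [← inf_sup_assoc_of_le _ h1, inf_comm, disjoint_iff.1 (hR i), bot_sup_eq]
      calc C i ⊓ (A i ⊔ gr.filt (i + 1))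
          = C i ⊓ (gr.filt i ⊓ (A i ⊔ gr.filt (i + 1))) := by
            rw [← inf_assoc, inf_eq_left.2 (hCsub i)]
        _ = C i ⊓ gr.filt (i + 1) := by rw [key]
        _ = ⊥ := disjoint_iff.1 (hCdisj i)
    have hCsuptop : ⨆ j, C j = ⊤ := by
      rw [eq_top_iff, ← hfilttop M le_rfl, ← hQ M]
      exact iSup₂_le fun j _ => le_iSup C j
    have hCfin : {i : ℤ | C i ≠ ⊥}.Finite := by
      apply (Set.finite_Icc M N).subset
      intro i hi
      simp only [Set.mem_setOf_eq] at hi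
      simp only [Set.mem_Icc]
      constructor
      · by_contra h
        exact hi (hCbotlow i (by omega))
      · by_contra h
        exact hi (hCbothigh i (by omega))
    refine ⟨⟨C, DirectSum.isInternal_submodule_of_iSupIndep_of_iSup_eq_top hCindep hCsuptop,
      hCfin⟩, ?_, ?_, ?_⟩
    · -- centered
      rw [ZGrading.IsCentered] at hcent ⊢
      rw [← hcent]
      apply finsum_congr
      intro i
      have e1 : Module.finrank K (C i) + Module.finrank K (gr.filt (i + 1)) =
          Module.finrank K (gr.filt i) := by
        have h := Submodule.finrank_sup_add_finrank_inf_eq (C i) (gr.filt (i + 1))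
        rw [hCsup i, disjoint_iff.1 (hCdisj i)] at h
        simpa using h.symm
      have e2 : Module.finrank K (gr.w i) + Module.finrank K (gr.filt (i + 1)) =
          Module.finrank K (gr.filt i) := by
        have h := Submodule.finrank_sup_add_finrank_inf_eq (gr.w i) (gr.filt (i + 1))
        rw [hsupstep i, disjoint_iff.1 (hdisjstep i)] at h
        simpa using h.symm
      have e3 : Module.finrank K (C i) = Module.finrank K (gr.w i) := by omega
      show (i : ℤ) * (Module.finrank K (C i) : ℤ) = _
      rw [e3]
    · -- range of flags
      have hfe : ∀ i, (⟨C, DirectSum.isInternal_submodule_of_iSupIndep_of_iSup_eq_top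
          hCindep hCsuptop, hCfin⟩ : ZGrading K V).filt i = gr.filt i := fun i => hQ i
      rw [funext hfe]
    · -- invariance of the weight spaces
      intro x hx i u hu
      rw [Submodule.mem_inf] at hu ⊢
      exact ⟨(hUc i).1 x hx u hu.1, hflag x hx i u hu.2⟩
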